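/- Let D be a dense countably infinite mesh in I^n and fix an integer k with 1 ≤ k ≤ n. Let B, C : D → I be functions with C ≤ B, L_k^{(C,B)}(DU) ≥ 0 for all DU ∈ R_k(D), and γ_{k,D}^{(C,B)}(d) = 0 for all d ∈ D. Assume C(v) = B(v) for all vertices v of the unit cube I^n, and that there exists a k-box Q with vertices in D such that V_{C,k}(Q) = v < 0. Then there exist s ∈ {1,…,2^{k−1}} and an enumeration x_1,…,x_{2^{k−1}} of the vertices of Q with multiplicity m_Q(x_i) = 1 such that: for each i ∈ {1,…,s}, C(x_i) < B(x_i) and there exists DU_i ∈ R_k(D) with m_{DU_i}(x_i) < 0 and L_k^{(C,B)}(DU_i)/|m_{DU_i}(x_i)| < |v|/s; and C(x_i) = B(x_i) for each i with s < i ≤ 2^{k−1}. -/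

import Mathlib

open scoped Classical BigOperators

namespace KIncr

/-- Points of the ambient space `ℝ^n`. -/
abbrev Pt (n : ℕ) := Fin n → ℝ

/-- Membership in the unit cube `I^n = [0,1]^n`. -/
def inCube {n : ℕ} (x : Pt n) : Prop := ∀ i, x i ∈ Set.Icc (0:ℝ) 1

/-- The unit cube as a set. -/
def cubeSet (n : ℕ) : Set (Pt n) := {x | inCube x}

/-- Vertices of the unit cube `I^n`. -/
def isCubeVertex {n : ℕ} (x : Pt n) : Prop := ∀ i, x i = 0 ∨ x i = 1

/-- A (formal) box, given by its lower-left and upper-right corners. -/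
structure Box (n : ℕ) where
  lo : Pt n
  hi : Pt n

/-- `R` is a `k`-box in `I^n`: exactly `k` coordinates are nondegenerate. -/
def Box.IsKBox {n : ℕ} (k : ℕ) (R : Box n) : Prop :=
  inCube R.lo ∧ inCube R.hi ∧ (∀ i, R.lo i ≤ R.hi i) ∧
    (Finset.univ.filter (fun i => R.lo i < R.hi i)).card = k

/-- `v` is a vertex of the box `R`. -/
def Box.IsVertex {n : ℕ} (R : Box n) (v : Pt n) : Prop :=
  ∀ i, v i = R.lo i ∨ v i = R.hi i

/-- The (finite) set of vertices of a box. -/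
noncomputable def Box.vertices {n : ℕ} (R : Box n) : Finset (Pt n) :=
  Finset.image (fun ε : Fin n → Bool => fun i => if ε i then R.hi i else R.lo i)
    Finset.univ

/-- The sign `(-1)^(m-(n-k))` of a vertex `v` of a `k`-box, where
`m = #{i : v i = lo i}`;  since `m ≥ n - k`, this equals `(-1)^(m+(n-k))`. -/
noncomputable def Box.sign {n : ℕ} (k : ℕ) (R : Box n) (v : Pt n) : ℤ :=
  (-1) ^ ((Finset.univ.filter (fun i => v i = R.lo i)).card + (n - k))

/-- The multiplicity `m_R(u)` of a point `u` with respect to a `k`-box `R`. -/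
noncomputable def Box.mult {n : ℕ} (k : ℕ) (R : Box n) (u : Pt n) : ℤ :=
  if R.IsVertex u then R.sign k u else 0

/-- `V_{A,k}(R) = ∑_{v ∈ ver R} sign_R(v) · A(v)`. -/
noncomputable def Vvol {n : ℕ} (k : ℕ) (A : Pt n → ℝ) (R : Box n) : ℝ :=
  ∑ v ∈ R.vertices, (R.sign k v : ℝ) * A v

/-- A function is `k`-increasing on `D` if `V_{A,k}(R) ≥ 0` for every `k`-box
with all vertices in `D`. -/
def KIncreasingOn {n : ℕ} (k : ℕ) (D : Set (Pt n)) (A : Pt n → ℝ) : Prop :=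
  ∀ R : Box n, R.IsKBox k → (∀ v ∈ R.vertices, v ∈ D) → 0 ≤ Vvol k A R

/-- The multiplicity `m_DU(u)` of a point with respect to a formal (multiset)
disjoint union of `k`-boxes. -/
noncomputable def multDU {n : ℕ} (k : ℕ) (DU : Multiset (Box n)) (u : Pt n) : ℤ :=
  (DU.map (fun R => R.mult k u)).sum

/-- `DU ∈ R_k(D)`: every box of the multiset `DU` is a `k`-box with all its
vertices in `D`. -/
def memRk {n : ℕ} (k : ℕ) (D : Set (Pt n)) (DU : Multiset (Box n)) : Prop :=
  ∀ R ∈ DU, R.IsKBox k ∧ ∀ v ∈ R.vertices, v ∈ D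

/-- `L_k^{(A,B)}(DU) = ∑_{m_DU(u)>0} m_DU(u)·B(u) + ∑_{m_DU(u)<0} m_DU(u)·A(u)`. -/
noncomputable def Lk {n : ℕ} (k : ℕ) (A B : Pt n → ℝ) (DU : Multiset (Box n)) : ℝ :=
  ∑ u ∈ DU.toFinset.biUnion Box.vertices,
    (if 0 < multDU k DU u then (multDU k DU u : ℝ) * B u
     else if multDU k DU u < 0 then (multDU k DU u : ℝ) * A u else 0)

/-- `P⁻_{k,D}^{(A,B)}(x)`, with the Mathlib convention `sInf ∅ = 0`. -/
noncomputable def Pneg {n : ℕ} (k : ℕ) (D : Set (Pt n)) (A B : Pt n → ℝ) (x : Pt n) : ℝ :=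
  sInf {r : ℝ | ∃ DU : Multiset (Box n), memRk k D DU ∧ multDU k DU x < 0 ∧
    r = Lk k A B DU / |(multDU k DU x : ℝ)|}

/-- `P⁺_{k,D}^{(A,B)}(x)`, with the Mathlib convention `sInf ∅ = 0`. -/
noncomputable def Ppos {n : ℕ} (k : ℕ) (D : Set (Pt n)) (A B : Pt n → ℝ) (x : Pt n) : ℝ :=
  sInf {r : ℝ | ∃ DU : Multiset (Box n), memRk k D DU ∧ 0 < multDU k DU x ∧
    r = Lk k A B DU / |(multDU k DU x : ℝ)|}

/-- `γ_{k,D}^{(A,B)}(x) = min {P⁻_{k,D}^{(A,B)}(x), B(x) - A(x)}`. -/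
noncomputable def gammaK {n : ℕ} (k : ℕ) (D : Set (Pt n)) (A B : Pt n → ℝ) (x : Pt n) : ℝ :=
  min (Pneg k D A B x) (B x - A x)

/-- `δ_{k,D}^{(A,B)}(x) = min {P⁺_{k,D}^{(A,B)}(x), B(x) - A(x)}`. -/
noncomputable def deltaK {n : ℕ} (k : ℕ) (D : Set (Pt n)) (A B : Pt n → ℝ) (x : Pt n) : ℝ :=
  min (Ppos k D A B x) (B x - A x)

/-- A dense countably infinite mesh `D = ∏ δᵢ` in `I^n`. -/
def IsMesh {n : ℕ} (D : Set (Pt n)) : Prop :=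
  ∃ δ : Fin n → Set ℝ,
    (∀ i, δ i ⊆ Set.Icc (0:ℝ) 1 ∧ (δ i).Countable ∧ (δ i).Infinite ∧
      Set.Icc (0:ℝ) 1 ⊆ closure (δ i) ∧ (0:ℝ) ∈ δ i ∧ (1:ℝ) ∈ δ i) ∧
    D = {x : Pt n | ∀ i, x i ∈ δ i}

/-- `A` is grounded: it vanishes whenever some coordinate is `0`. -/
def Grounded {n : ℕ} (A : Pt n → ℝ) : Prop :=
  ∀ x : Pt n, inCube x → (∃ i, x i = 0) → A x = 0

/-- `A` is 1-increasing (increasing in each variable). -/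
def OneIncreasing {n : ℕ} (A : Pt n → ℝ) : Prop :=
  ∀ x y : Pt n, inCube x → inCube y → (∀ i, x i ≤ y i) → A x ≤ A y

/-- `A` has uniform marginals. -/
def UniformMarginals {n : ℕ} (A : Pt n → ℝ) : Prop :=
  ∀ i : Fin n, ∀ t ∈ Set.Icc (0:ℝ) 1, A (Function.update (fun _ => (1:ℝ)) i t) = t

/-- `A` is a standardized function. -/
def Standardized {n : ℕ} (A : Pt n → ℝ) : Prop :=
  Grounded A ∧ OneIncreasing A ∧ A (fun _ => (1:ℝ)) = 1

/-- `A` is a semicopula. -/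
def Semicopula {n : ℕ} (A : Pt n → ℝ) : Prop :=
  Grounded A ∧ OneIncreasing A ∧ UniformMarginals A

/-- `A` maps the unit cube into `I = [0,1]`. -/
def MapsToI {n : ℕ} (A : Pt n → ℝ) : Prop :=
  ∀ x : Pt n, inCube x → A x ∈ Set.Icc (0:ℝ) 1

/-- Condition S: all discontinuities of all sections of `A` lie in the
countable set `S`. -/
def CondS {n : ℕ} (A : Pt n → ℝ) (S : Set ℝ) : Prop :=
  ∀ u : Pt n, inCube u → ∀ i : Fin n, ∀ t ∈ Set.Icc (0:ℝ) 1, t ∉ S →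
    ContinuousWithinAt (fun s => A (Function.update u i s)) (Set.Icc (0:ℝ) 1) t

/-- A quasi-copula: a semicopula that is 1-Lipschitz w.r.t. the ℓ¹-norm. -/
def QuasiCopula {n : ℕ} (A : Pt n → ℝ) : Prop :=
  Semicopula A ∧ ∀ x y : Pt n, inCube x → inCube y → |A x - A y| ≤ ∑ i, |x i - y i|

end KIncr


lemma negOnePowEq (a b : ℕ) (h : Even (a + b)) : ((-1:ℤ))^a = (-1)^b := by
  rcases Nat.even_add.mp h with h'
  rcases Nat.even_or_odd a with ha | ha
  · rw [ha.neg_one_pow, (h'.mp ha).neg_one_pow]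
  · rw [ha.neg_one_pow, (Nat.odd_iff.mpr (by
      rcases Nat.even_or_odd b with hb | hb
      · exact absurd (h'.mpr hb) (Nat.not_even_iff_odd.mpr ha)
      · exact Nat.odd_iff.mp hb)).neg_one_pow]

lemma count_parity {α : Type*} [DecidableEq α] (K : Finset α) (hK : K.Nonempty) (m : ℕ) :
    (K.powerset.filter (fun S => Even (S.card + m))).card = 2 ^ (K.card - 1) := by
  obtain ⟨a, ha⟩ := hK
  set E := K.powerset.filter (fun S => Even (S.card + m)) with hE
  set O := K.powerset.filter (fun S => ¬ Even (S.card + m)) with hO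
  have hEO : E.card + O.card = 2 ^ K.card := by
    rw [hE, hO, Finset.card_filter_add_card_filter_not, Finset.card_powerset]
  set f : Finset α → Finset α := fun S => if a ∈ S then S.erase a else insert a S with hf
  have hinv : ∀ S : Finset α, f (f S) = S := by
    intro S
    by_cases haS : a ∈ S
    · simp only [hf, if_pos haS, if_neg (Finset.notMem_erase a S), Finset.insert_erase haS]
    · simp only [hf, if_neg haS, if_pos (Finset.mem_insert_self a S), Finset.erase_insert haS]
  have hsub : ∀ S : Finset α, S ⊆ K → f S ⊆ K := by
    intro S hS
    by_cases haS : a ∈ S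
    · simpa only [hf, if_pos haS] using (Finset.erase_subset a S).trans hS
    · simpa only [hf, if_neg haS] using Finset.insert_subset ha hS
  have hpar : ∀ S : Finset α, Even (S.card + m) ↔ ¬ Even ((f S).card + m) := by
    intro S
    by_cases haS : a ∈ S
    · have h1 : (f S).card = S.card - 1 := by
        simp only [hf, if_pos haS, Finset.card_erase_of_mem haS]
      have h2 : 1 ≤ S.card := Finset.card_pos.mpr ⟨a, haS⟩
      rw [h1, Nat.even_iff, Nat.even_iff]
      omega
    · have h1 : (f S).card = S.card + 1 := by
        simp only [hf, if_neg haS, Finset.card_insert_of_notMem haS]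
      rw [h1, Nat.even_iff, Nat.even_iff]
      omega
  have hcardEq : E.card = O.card := by
    refine Finset.card_nbij' f f ?_ ?_ ?_ ?_
    · intro S hS
      rw [hE, Finset.mem_coe, Finset.mem_filter, Finset.mem_powerset] at hS
      rw [hO, Finset.mem_coe, Finset.mem_filter, Finset.mem_powerset]
      exact ⟨hsub S hS.1, (hpar S).mp hS.2⟩
    · intro S hS
      rw [hO, Finset.mem_coe, Finset.mem_filter, Finset.mem_powerset] at hS
      rw [hE, Finset.mem_coe, Finset.mem_filter, Finset.mem_powerset]
      refine ⟨hsub S hS.1, ?_⟩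
      have h3 := hpar (f S)
      rw [hinv S] at h3
      exact h3.mpr hS.2
    · intro S _; exact hinv S
    · intro S _; exact hinv S
  have hk1 : 1 ≤ K.card := Finset.card_pos.mpr ⟨a, ha⟩
  have h2 : 2 * 2 ^ (K.card - 1) = 2 ^ K.card := by
    rw [← pow_succ']
    congr 1
    omega
  omega
namespace KIncr

variable {n k : ℕ}

lemma isVertex_of_mem_vertices {R : Box n} {u : Pt n} (h : u ∈ R.vertices) :
    R.IsVertex u := by
  rw [Box.vertices, Finset.mem_image] at h
  obtain ⟨ε, -, rfl⟩ := h
  intro i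
  by_cases hε : ε i <;> simp [hε]

lemma mult_eq_sign {R : Box n} {u : Pt n} (h : R.IsVertex u) :
    R.mult k u = R.sign k u := if_pos h

lemma sign_eq_one_or_neg_one (R : Box n) (u : Pt n) :
    R.sign k u = 1 ∨ R.sign k u = -1 := by
  rw [Box.sign]
  rcases Nat.even_or_odd ((Finset.univ.filter (fun i => u i = R.lo i)).card + (n - k)) with h | h
  · exact Or.inl h.neg_one_pow
  · exact Or.inr h.neg_one_pow

/-- the vertex of `R` selected by a subset `S` of coordinates. -/
noncomputable def vtx (R : Box n) (S : Finset (Fin n)) : Pt n :=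
  fun i => if i ∈ S then R.hi i else R.lo i

lemma vtx_mem_vertices (R : Box n) (S : Finset (Fin n)) : vtx R S ∈ R.vertices := by
  rw [Box.vertices, Finset.mem_image]
  refine ⟨fun i => if i ∈ S then true else false, Finset.mem_univ _, ?_⟩
  funext i
  by_cases h : i ∈ S <;> simp [vtx, h]

lemma isVertex_iff_mem_vertices {R : Box n} {u : Pt n} :
    u ∈ R.vertices ↔ R.IsVertex u := by
  refine ⟨isVertex_of_mem_vertices, fun h => ?_⟩
  have : u = vtx R (Finset.univ.filter (fun i => u i = R.hi i ∧ ¬ u i = R.lo i)) := by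
    funext i
    rcases h i with h' | h' <;> by_cases h2 : u i = R.lo i <;>
      simp [vtx, h', h2] <;> simp_all
  rw [this]
  exact vtx_mem_vertices R _

end KIncr
namespace KIncr

variable {n k : ℕ}

lemma boxK_card {Q : Box n} (hQ : Q.IsKBox k) :
    (Finset.univ.filter (fun i => Q.lo i < Q.hi i)).card = k := hQ.2.2.2

lemma vtx_injOn {Q : Box n} {S T : Finset (Fin n)}
    (hS : S ⊆ Finset.univ.filter (fun i => Q.lo i < Q.hi i))
    (hT : T ⊆ Finset.univ.filter (fun i => Q.lo i < Q.hi i))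
    (h : vtx Q S = vtx Q T) : S = T := by
  ext i
  constructor
  · intro hiS
    have hlt : Q.lo i < Q.hi i := (Finset.mem_filter.mp (hS hiS)).2
    by_contra hiT
    have := congrFun h i
    rw [vtx, vtx] at this
    simp only [if_pos hiS, if_neg hiT] at this
    exact absurd this (ne_of_gt hlt)
  · intro hiT
    have hlt : Q.lo i < Q.hi i := (Finset.mem_filter.mp (hT hiT)).2
    by_contra hiS
    have := congrFun h i
    rw [vtx, vtx] at this
    simp only [if_pos hiT, if_neg hiS] at this
    exact absurd this.symm (ne_of_gt hlt)

lemma exists_subset_vtx {Q : Box n} (hQ : Q.IsKBox k) {u : Pt n} (hu : u ∈ Q.vertices) :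
    ∃ S ⊆ Finset.univ.filter (fun i => Q.lo i < Q.hi i), vtx Q S = u := by
  rw [Box.vertices, Finset.mem_image] at hu
  obtain ⟨ε, -, rfl⟩ := hu
  refine ⟨Finset.univ.filter (fun i => Q.lo i < Q.hi i ∧ ε i = true),
    fun i hi => by simp_all, ?_⟩
  funext i
  rw [vtx]
  by_cases h1 : Q.lo i < Q.hi i
  · by_cases h2 : ε i <;> simp [h1, h2]
  · have : Q.lo i = Q.hi i := le_antisymm (hQ.2.2.1 i) (not_lt.mp h1)
    by_cases h2 : ε i <;> simp [h1, h2, this]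

lemma mult_vtx {Q : Box n} (hQ : Q.IsKBox k) {S : Finset (Fin n)}
    (hS : S ⊆ Finset.univ.filter (fun i => Q.lo i < Q.hi i)) :
    Q.mult k (vtx Q S) = (-1) ^ (S.card + k) := by
  have hvert : Q.IsVertex (vtx Q S) := by
    intro i
    rw [vtx]
    by_cases h : i ∈ S <;> simp [h]
  rw [mult_eq_sign hvert, Box.sign]
  have hfilter : Finset.univ.filter (fun i => vtx Q S i = Q.lo i) = Finset.univ \ S := by
    ext i
    simp only [Finset.mem_filter, Finset.mem_univ, true_and, Finset.mem_sdiff, vtx]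
    by_cases h : i ∈ S
    · have hlt : Q.lo i < Q.hi i := (Finset.mem_filter.mp (hS h)).2
      simp [h, ne_of_gt hlt]
    · simp [h]
  rw [hfilter, Finset.card_sdiff_of_subset (Finset.subset_univ S), Finset.card_univ, Fintype.card_fin]
  have hSn : S.card ≤ n := le_trans (Finset.card_le_card (Finset.subset_univ S))
    (le_of_eq (by rw [Finset.card_univ, Fintype.card_fin]))
  have hkn : k ≤ n := by
    have := boxK_card hQ
    calc k = _ := this.symm
    _ ≤ Finset.univ.card := Finset.card_le_card (Finset.filter_subset _ _)
    _ = n := by rw [Finset.card_univ, Fintype.card_fin]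
  exact negOnePowEq _ _ ⟨n, by omega⟩

lemma card_mult_one {Q : Box n} (hQ : Q.IsKBox k) (hk1 : 1 ≤ k) :
    (Q.vertices.filter (fun u => Q.mult k u = 1)).card = 2 ^ (k - 1) := by
  set K := Finset.univ.filter (fun i => Q.lo i < Q.hi i) with hKdef
  have hK : K.card = k := boxK_card hQ
  set T := K.powerset.filter (fun S => Even (S.card + k)) with hT
  have himg : Q.vertices.filter (fun u => Q.mult k u = 1) = T.image (vtx Q) := by
    ext u
    simp only [Finset.mem_filter, Finset.mem_image]
    constructor
    · rintro ⟨hu, hm⟩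
      obtain ⟨S, hSK, rfl⟩ := exists_subset_vtx hQ hu
      refine ⟨S, ?_, rfl⟩
      rw [hT, Finset.mem_filter, Finset.mem_powerset]
      refine ⟨hSK, ?_⟩
      rw [mult_vtx hQ hSK] at hm
      by_contra hodd
      rw [(Nat.not_even_iff_odd.mp hodd).neg_one_pow] at hm
      norm_num at hm
    · rintro ⟨S, hST, rfl⟩
      rw [hT, Finset.mem_filter, Finset.mem_powerset] at hST
      exact ⟨vtx_mem_vertices Q S, by rw [mult_vtx hQ hST.1, hST.2.neg_one_pow]⟩
  rw [himg, Finset.card_image_of_injOn (fun S hS T' hT' h =>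
    vtx_injOn (Finset.mem_powerset.mp (Finset.mem_filter.mp hS).1)
      (Finset.mem_powerset.mp (Finset.mem_filter.mp hT').1) h)]
  have hKne : K.Nonempty := Finset.card_pos.mp (by omega)
  rw [count_parity K hKne k, hK]

end KIncr
namespace KIncr

lemma multDU_singleton {n k : ℕ} (R : Box n) (u : Pt n) :
    multDU k {R} u = R.mult k u := by
  rw [multDU, Multiset.map_singleton, Multiset.sum_singleton]

lemma exists_neg_DU {n k : ℕ} (hk1 : 1 ≤ k) (hkn : k ≤ n) (δ : Fin n → Set ℝ)
    (hδ : ∀ i, δ i ⊆ Set.Icc (0:ℝ) 1 ∧ (δ i).Countable ∧ (δ i).Infinite ∧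
      Set.Icc (0:ℝ) 1 ⊆ closure (δ i) ∧ (0:ℝ) ∈ δ i ∧ (1:ℝ) ∈ δ i)
    (u : Pt n) (hu : ∀ i, u i ∈ δ i) (i₀ : Fin n) (h0 : 0 < u i₀) (h1 : u i₀ < 1) :
    ∃ DU : Multiset (Box n), memRk k {x : Pt n | ∀ i, x i ∈ δ i} DU ∧ multDU k DU u < 0 := by
  have hub : ∀ i, u i ∈ Set.Icc (0:ℝ) 1 := fun i => (hδ i).1 (hu i)
  obtain ⟨K', hK'sub, hK'card⟩ : ∃ K' ⊆ Finset.univ.erase i₀, K'.card = k - 1 :=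
    Finset.exists_subset_card_eq (by
      rw [Finset.card_erase_of_mem (Finset.mem_univ i₀), Finset.card_univ, Fintype.card_fin]
      omega)
  have hi₀K' : i₀ ∉ K' := fun h => Finset.notMem_erase i₀ Finset.univ (hK'sub h)
  set c := (K'.filter (fun i => u i = 0)).card with hc
  set b := Even c with hb
  set R : Box n := ⟨fun i => if i = i₀ then (if b then u i₀ else 0) else if i ∈ K' then 0 else u i,
    fun i => if i = i₀ then (if b then 1 else u i₀) else if i ∈ K' then (if u i = 0 then 1 else u i) else u i⟩
    with hR
  have hlo : ∀ i, R.lo i ∈ δ i := by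
    intro i
    rw [hR]
    by_cases h : i = i₀
    · subst h; by_cases hbb : b <;> simp [hbb, hu i, (hδ i).2.2.2.2.1]
    · by_cases h2 : i ∈ K' <;> simp [h, h2, hu i, (hδ i).2.2.2.2.1]
  have hhi : ∀ i, R.hi i ∈ δ i := by
    intro i
    rw [hR]
    by_cases h : i = i₀
    · subst h; by_cases hbb : b <;> simp [hbb, hu i, (hδ i).2.2.2.2.2]
    · by_cases h2 : i ∈ K'
      · by_cases h3 : u i = 0 <;> simp [h, h2, h3, hu i, (hδ i).2.2.2.2.2]
      · simp [h, h2, hu i]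
  have hle : ∀ i, R.lo i ≤ R.hi i := by
    intro i
    rw [hR]
    by_cases h : i = i₀
    · subst h
      by_cases hbb : b <;> simp [hbb, le_of_lt h1, le_of_lt h0]
    · by_cases h2 : i ∈ K'
      · by_cases h3 : u i = 0 <;> simp [h, h2, h3, (hub i).1, zero_le_one]
      · simp [h, h2]
  have hK : Finset.univ.filter (fun i => R.lo i < R.hi i) = insert i₀ K' := by
    ext i
    simp only [Finset.mem_filter, Finset.mem_univ, true_and, Finset.mem_insert]
    constructor
    · intro hlt
      by_contra hcon
      push_neg at hcon
      simp only [hR, if_neg hcon.1, if_neg hcon.2] at hlt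
      exact lt_irrefl _ hlt
    · intro hcase
      show (if i = i₀ then _ else _) < (if i = i₀ then _ else _)
      rcases hcase with h | h
      · subst h
        by_cases hbb : b <;> simp [hbb, h0, h1]
      · have hne : i ≠ i₀ := fun he => hi₀K' (he ▸ h)
        by_cases h3 : u i = 0
        · simp [hne, h, h3]
        · have : 0 < u i := lt_of_le_of_ne (hub i).1 (Ne.symm h3)
          simp [hne, h, h3, this]
  have hKcard : (insert i₀ K').card = k := by
    rw [Finset.card_insert_of_notMem hi₀K', hK'card]
    omega
  have hKbox : R.IsKBox k := by
    refine ⟨fun i => (hδ i).1 (hlo i), fun i => (hδ i).1 (hhi i), hle, ?_⟩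
    rw [hK, hKcard]
  have hvert : R.IsVertex u := by
    intro i
    rw [hR]
    by_cases h : i = i₀
    · subst h
      by_cases hbb : b
      · left; simp [hbb]
      · right; simp [hbb]
    · by_cases h2 : i ∈ K'
      · by_cases h3 : u i = 0
        · left; simp [h, h2, h3]
        · right; simp [h, h2, h3]
      · left; simp [h, h2]
  -- compute the multiplicity
  have hm : (Finset.univ.filter (fun i => u i = R.lo i)).card
      = (n - k) + c + (if b then 1 else 0) := by
    have hsplit : Finset.univ.filter (fun i => u i = R.lo i)
        = (Finset.filter (fun i => u i = R.lo i) (insert i₀ K')) ∪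
          (Finset.filter (fun i => u i = R.lo i) (Finset.univ \ insert i₀ K')) := by
      rw [← Finset.filter_union, Finset.union_sdiff_of_subset (Finset.subset_univ _)]
    have hdisj : Disjoint (Finset.filter (fun i => u i = R.lo i) (insert i₀ K'))
        (Finset.filter (fun i => u i = R.lo i) (Finset.univ \ insert i₀ K')) :=
      Finset.disjoint_filter_filter (Finset.disjoint_sdiff)
    rw [hsplit, Finset.card_union_of_disjoint hdisj]
    have h2 : Finset.filter (fun i => u i = R.lo i) (Finset.univ \ insert i₀ K')
        = Finset.univ \ insert i₀ K' := by
      apply Finset.filter_true_of_mem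
      intro i hi
      rw [Finset.mem_sdiff, Finset.mem_insert] at hi
      push_neg at hi
      rw [hR]
      simp [hi.2.1, hi.2.2]
    have h3 : (Finset.univ \ insert i₀ K').card = n - k := by
      rw [Finset.card_sdiff_of_subset (Finset.subset_univ _), Finset.card_univ, Fintype.card_fin, hKcard]
    have h4 : Finset.filter (fun i => u i = R.lo i) (insert i₀ K')
        = (if b then {i₀} else ∅) ∪ K'.filter (fun i => u i = 0) := by
      rw [Finset.filter_insert]
      have hKfilter : Finset.filter (fun i => u i = R.lo i) K'
          = K'.filter (fun i => u i = 0) := by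
        apply Finset.filter_congr
        intro i hi
        have hne : i ≠ i₀ := fun he => hi₀K' (he ▸ hi)
        rw [hR]
        simp [hne, hi]
      by_cases hbb : b
      · rw [if_pos (by rw [hR]; simp [hbb]), hKfilter, if_pos hbb]
        rw [Finset.insert_eq]
      · rw [if_neg (by rw [hR]; simp [hbb]; exact ne_of_gt h0), hKfilter, if_neg hbb,
          Finset.empty_union]
    rw [h2, h3, h4]
    have h5 : Disjoint (if b then ({i₀} : Finset (Fin n)) else ∅) (K'.filter (fun i => u i = 0)) := by
      by_cases hbb : b
      · rw [if_pos hbb]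
        simp only [Finset.disjoint_singleton_left, Finset.mem_filter]
        exact fun h => hi₀K' h.1
      · rw [if_neg hbb]; exact Finset.disjoint_empty_left _
    rw [Finset.card_union_of_disjoint h5]
    by_cases hbb : b <;> simp [hbb, hc] <;> omega
  have hsign : R.sign k u = -1 := by
    rw [Box.sign, hm]
    have : ¬ Even ((n - k + c + (if b then 1 else 0)) + (n - k)) := by
      by_cases hbb : b
      · have hcE : c % 2 = 0 := Nat.even_iff.mp (hb ▸ hbb)
        rw [if_pos hbb, Nat.even_iff]
        omega
      · have hcO : ¬ (c % 2 = 0) := fun h => hbb (hb ▸ Nat.even_iff.mpr h)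
        rw [if_neg hbb, Nat.even_iff]
        omega
    exact (Nat.odd_iff.mpr (by rw [Nat.even_iff] at this; omega)).neg_one_pow
  refine ⟨{R}, ?_, ?_⟩
  · intro R' hR'
    rw [Multiset.mem_singleton] at hR'
    subst hR'
    refine ⟨hKbox, ?_⟩
    intro w hw
    have hwv := isVertex_of_mem_vertices hw
    intro i
    rcases hwv i with h | h
    · rw [h]; exact hlo i
    · rw [h]; exact hhi i
  · rw [multDU_singleton, mult_eq_sign hvert, hsign]
    norm_num

end KIncr
namespace KIncr

lemma Lk_singleton_eq {n k : ℕ} (Q : Box n) (B C : Pt n → ℝ)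
    (hBC : ∀ u ∈ Q.vertices, Q.mult k u = 1 → C u = B u) :
    Lk k C B {Q} = Vvol k C Q := by
  rw [Lk, Vvol, Multiset.toFinset_singleton, Finset.singleton_biUnion]
  apply Finset.sum_congr rfl
  intro u hu
  have hv := isVertex_of_mem_vertices hu
  have hms : Q.mult k u = Q.sign k u := mult_eq_sign hv
  rw [multDU_singleton]
  rcases sign_eq_one_or_neg_one (k := k) Q u with h | h
  · rw [hms, h]
    norm_num
    exact (hBC u hu (by rw [hms, h])).symm
  · rw [hms, h]
    norm_num

lemma Pneg_eq_zero {n k : ℕ} {D : Set (Pt n)} {B C : Pt n → ℝ} {x : Pt n}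
    (hgamma : gammaK k D C B x = 0) (hlt : C x < B x) : Pneg k D C B x = 0 := by
  rw [gammaK] at hgamma
  rcases min_eq_iff.mp hgamma with ⟨h, -⟩ | ⟨h, -⟩
  · exact h
  · linarith

lemma exists_cheap_DU {n k : ℕ} {D : Set (Pt n)} {B C : Pt n → ℝ} {x : Pt n}
    (hL : ∀ DU : Multiset (Box n), memRk k D DU → 0 ≤ Lk k C B DU)
    (hPneg : Pneg k D C B x = 0)
    (hne : ∃ DU : Multiset (Box n), memRk k D DU ∧ multDU k DU x < 0)
    {ε : ℝ} (hε : 0 < ε) :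
    ∃ DU : Multiset (Box n), memRk k D DU ∧ multDU k DU x < 0 ∧
      Lk k C B DU / |(multDU k DU x : ℝ)| < ε := by
  by_contra hcon
  push_neg at hcon
  set S := {r : ℝ | ∃ DU : Multiset (Box n), memRk k D DU ∧ multDU k DU x < 0 ∧
    r = Lk k C B DU / |(multDU k DU x : ℝ)|} with hS
  have hSne : S.Nonempty := by
    obtain ⟨DU, h1, h2⟩ := hne
    exact ⟨_, DU, h1, h2, rfl⟩
  have hbound : ε ≤ sInf S := by
    apply le_csInf hSne
    rintro r ⟨DU, h1, h2, rfl⟩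
    exact hcon DU h1 h2
  rw [← Pneg, hPneg] at hbound
  linarith

end KIncr
open KIncr
/-- Lemma 4.3: if `k`-increasingness of `C` fails on a `k`-box,
the positive-multiplicity vertices where `C < B` admit cheap disjoint unions. -/
theorem stmt7 (n k : ℕ) (hn : 1 ≤ n) (hk1 : 1 ≤ k) (hkn : k ≤ n)
    (D : Set (Pt n)) (hD : IsMesh D) (B C : Pt n → ℝ)
    (hCI : ∀ u ∈ D, C u ∈ Set.Icc (0:ℝ) 1) (hBI : ∀ u ∈ D, B u ∈ Set.Icc (0:ℝ) 1)
    (hCB : ∀ u ∈ D, C u ≤ B u)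
    (hL : ∀ DU : Multiset (Box n), memRk k D DU → 0 ≤ Lk k C B DU)
    (hgamma : ∀ d ∈ D, gammaK k D C B d = 0)
    (hvert : ∀ w : Pt n, isCubeVertex w → C w = B w)
    (Q : Box n) (hQ : Q.IsKBox k) (hQD : ∀ w ∈ Q.vertices, w ∈ D)
    (v : ℝ) (hv : Vvol k C Q = v) (hvneg : v < 0) :
    ∃ s : ℕ, 1 ≤ s ∧ s ≤ 2 ^ (k - 1) ∧
      ∃ x : Fin (2 ^ (k - 1)) → Pt n, Function.Injective x ∧
        (∀ i, x i ∈ Q.vertices ∧ Q.mult k (x i) = 1) ∧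
        (∀ u ∈ Q.vertices, Q.mult k u = 1 → ∃ i, x i = u) ∧
        (∀ i : Fin (2 ^ (k - 1)), (i : ℕ) < s →
          C (x i) < B (x i) ∧
          ∃ DU : Multiset (Box n), memRk k D DU ∧ multDU k DU (x i) < 0 ∧
            Lk k C B DU / |(multDU k DU (x i) : ℝ)| < |v| / (s : ℝ)) ∧
        (∀ i : Fin (2 ^ (k - 1)), s ≤ (i : ℕ) → C (x i) = B (x i)) := by
  classical
  obtain ⟨δ, hδ, hDeq⟩ := hD
  set P := Q.vertices.filter (fun u => Q.mult k u = 1) with hP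
  have hPcard : P.card = 2 ^ (k - 1) := card_mult_one hQ hk1
  set G := P.filter (fun u => C u < B u) with hG
  set H := P.filter (fun u => ¬ C u < B u) with hH
  have hGHcard : G.card + H.card = P.card := by
    rw [hG, hH]
    exact Finset.card_filter_add_card_filter_not (p := fun u => C u < B u)
  have hPD : ∀ u ∈ P, u ∈ D := fun u hu => hQD u (Finset.mem_filter.mp hu).1
  have hPvert : ∀ u ∈ P, u ∈ Q.vertices ∧ Q.mult k u = 1 := by
    intro u hu
    rw [hP, Finset.mem_filter] at hu
    exact hu
  have hGP : ∀ u ∈ G, u ∈ P := fun u hu => (Finset.mem_filter.mp hu).1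
  have hHP : ∀ u ∈ H, u ∈ P := fun u hu => (Finset.mem_filter.mp hu).1
  have hHeq : ∀ u ∈ H, C u = B u := by
    intro u hu
    rw [hH, Finset.mem_filter] at hu
    exact le_antisymm (hCB u (hPD u hu.1)) (not_lt.mp hu.2)
  have hGlt : ∀ u ∈ G, C u < B u := by
    intro u hu
    rw [hG, Finset.mem_filter] at hu
    exact hu.2
  have hs1 : 1 ≤ G.card := by
    by_contra hcon
    have hG0 : G = ∅ := Finset.card_eq_zero.mp (by omega)
    have hall : ∀ u ∈ Q.vertices, Q.mult k u = 1 → C u = B u := by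
      intro u hu hm
      apply hHeq
      have huP : u ∈ P := Finset.mem_filter.mpr ⟨hu, hm⟩
      rw [hH, Finset.mem_filter]
      refine ⟨huP, fun hlt => ?_⟩
      have : u ∈ G := Finset.mem_filter.mpr ⟨huP, hlt⟩
      rw [hG0] at this
      exact absurd this (Finset.notMem_empty u)
    have hLQ := hL {Q} (by
      intro R hR
      rw [Multiset.mem_singleton] at hR
      subst hR
      exact ⟨hQ, hQD⟩)
    rw [Lk_singleton_eq Q B C hall, hv] at hLQ
    linarith
  have htot : G.card + H.card = 2 ^ (k - 1) := by rw [hGHcard, hPcard]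
  have hsle : G.card ≤ 2 ^ (k - 1) := Nat.le.intro htot
  refine ⟨G.card, hs1, hsle, ?_⟩
  have hidx : ∀ i : Fin (2 ^ (k - 1)), ¬ (i : ℕ) < G.card → (i : ℕ) - G.card < H.card := by
    intro i h
    have h2 : (i : ℕ) < G.card + H.card := by rw [htot]; exact i.2
    omega
  set x : Fin (2 ^ (k - 1)) → Pt n := fun i =>
    if h : (i : ℕ) < G.card then
      ((G.equivFin.symm ⟨(i : ℕ), h⟩ : {u // u ∈ G}) : Pt n)
    else ((H.equivFin.symm ⟨(i : ℕ) - G.card, hidx i h⟩ : {u // u ∈ H}) : Pt n) with hx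
  have hxG : ∀ (i : Fin (2 ^ (k - 1))) (h : (i : ℕ) < G.card), x i ∈ G := by
    intro i h
    rw [hx]
    simp only [dif_pos h]
    exact (G.equivFin.symm ⟨(i : ℕ), h⟩).2
  have hxH : ∀ (i : Fin (2 ^ (k - 1))) (h : ¬ (i : ℕ) < G.card), x i ∈ H := by
    intro i h
    rw [hx]
    simp only [dif_neg h]
    exact (H.equivFin.symm ⟨(i : ℕ) - G.card, hidx i h⟩).2
  have hxP : ∀ i : Fin (2 ^ (k - 1)), x i ∈ P := by
    intro i
    by_cases h : (i : ℕ) < G.card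
    · exact hGP _ (hxG i h)
    · exact hHP _ (hxH i h)
  have hGHdisj : ∀ u, u ∈ G → u ∈ H → False := by
    intro u h1 h2
    rw [hG, Finset.mem_filter] at h1
    rw [hH, Finset.mem_filter] at h2
    exact h2.2 h1.2
  have hinj : Function.Injective x := by
    intro i j hij
    by_cases hi : (i : ℕ) < G.card <;> by_cases hj : (j : ℕ) < G.card
    · rw [hx] at hij
      simp only [dif_pos hi, dif_pos hj] at hij
      have h2 := G.equivFin.symm.injective (Subtype.ext hij)
      exact Fin.ext (by simpa using congrArg Fin.val h2)
    · exact absurd (hij ▸ hxG i hi) (fun h => hGHdisj _ h (hxH j hj))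
    · exact absurd (hij.symm ▸ hxG j hj) (fun h => hGHdisj _ h (hxH i hi))
    · rw [hx] at hij
      simp only [dif_neg hi, dif_neg hj] at hij
      have h2 := H.equivFin.symm.injective (Subtype.ext hij)
      have h3 : (i : ℕ) - G.card = (j : ℕ) - G.card := by
        simpa using congrArg Fin.val h2
      exact Fin.ext (by omega)
  refine ⟨x, hinj, fun i => hPvert _ (hxP i), ?_, ?_, ?_⟩
  · -- coverage
    intro u hu hm
    have huP : u ∈ P := Finset.mem_filter.mpr ⟨hu, hm⟩
    by_cases hlt : C u < B u
    · have huG : u ∈ G := Finset.mem_filter.mpr ⟨huP, hlt⟩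
      set j := G.equivFin ⟨u, huG⟩ with hj
      have hjlt : (j : ℕ) < G.card := j.2
      refine ⟨⟨(j : ℕ), lt_of_lt_of_le hjlt hsle⟩, ?_⟩
      rw [hx]
      simp only [dif_pos hjlt]
      have : (⟨(j : ℕ), hjlt⟩ : Fin G.card) = j := Fin.ext rfl
      rw [this, hj, Equiv.symm_apply_apply]
    · have huH : u ∈ H := Finset.mem_filter.mpr ⟨huP, hlt⟩
      set j := H.equivFin ⟨u, huH⟩ with hj
      have hjlt : (j : ℕ) < H.card := j.2
      have hilt : G.card + (j : ℕ) < 2 ^ (k - 1) :=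
        lt_of_lt_of_le (by omega : G.card + (j : ℕ) < G.card + H.card) (le_of_eq htot)
      refine ⟨⟨G.card + (j : ℕ), hilt⟩, ?_⟩
      have hni : ¬ (G.card + (j : ℕ) < G.card) := by omega
      rw [hx]
      simp only [dif_neg hni]
      have : (⟨G.card + (j : ℕ) - G.card, hidx ⟨G.card + (j : ℕ), hilt⟩ hni⟩ : Fin H.card) = j :=
        Fin.ext (by simp only [Fin.val_mk]; omega)
      rw [this, hj, Equiv.symm_apply_apply]
  · -- heads
    intro i hi
    have huG := hxG i hi
    have hlt : C (x i) < B (x i) := hGlt _ huG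
    refine ⟨hlt, ?_⟩
    have huD : x i ∈ D := hPD _ (hGP _ huG)
    have huδ : ∀ j, x i j ∈ δ j := by
      rw [hDeq] at huD
      exact huD
    have hncv : ¬ isCubeVertex (x i) := fun h => absurd (hvert _ h) (ne_of_lt hlt)
    rw [isCubeVertex] at hncv
    push_neg at hncv
    obtain ⟨i₀, h0, h1⟩ := hncv
    have hub := (hδ i₀).1 (huδ i₀)
    have h0' : 0 < x i i₀ := lt_of_le_of_ne hub.1 (Ne.symm h0)
    have h1' : x i i₀ < 1 := lt_of_le_of_ne hub.2 h1
    have hne := exists_neg_DU hk1 hkn δ hδ (x i) huδ i₀ h0' h1'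
    rw [← hDeq] at hne
    have hPneg : Pneg k D C B (x i) = 0 := Pneg_eq_zero (hgamma _ huD) hlt
    have hε : 0 < |v| / (G.card : ℝ) := by
      apply div_pos (abs_pos.mpr (ne_of_lt hvneg))
      exact_mod_cast Nat.pos_of_ne_zero (by omega)
    exact exists_cheap_DU hL hPneg hne hε
  · -- tails
    intro i hi
    exact hHeq _ (hxH i (by omega))
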